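/- Let 𝒯 be complex conjugation with respect to a fixed basis, H Hermitian with [H,𝒯]=0, and ρ positive semidefinite. Define S_𝒯(ρ) = (ρ + 𝒯ρ𝒯⁻¹)/2. Then the 𝒯-symmetric ergotropy of ρ equals the unrestricted ergotropy of S_𝒯(ρ): max over unitaries U commuting with 𝒯 of tr(ρ(H - U†HU)) equals max over all unitaries V of tr(S_𝒯(ρ)(H - V†HV)). -/

import Mathlib

open Matrix ComplexOrder

/-- The (real) extracted work `W(σ, H, V) = tr(σ(H - V†HV))`. -/
noncomputable def workR {n : Type*} [Fintype n] (σ H V : Matrix n n ℂ) : ℝ :=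
  ((σ * (H - Vᴴ * H * V)).trace).re

section Aux

set_option linter.unusedSectionVars false

open Complex Finset

variable {n : Type*} [Fintype n] [DecidableEq n]

lemma permMatrix_apply (σ : Equiv.Perm n) (i j : n) :
    (σ.permMatrix ℂ) i j = if σ i = j then 1 else 0 := by
  simp [Equiv.Perm.permMatrix, PEquiv.toMatrix_apply, Equiv.toPEquiv_apply]

lemma permMatrix_mem_unitary (σ : Equiv.Perm n) :
    σ.permMatrix ℂ ∈ Matrix.unitaryGroup n ℂ := by
  constructor
  · ext i j
    simp only [Matrix.mul_apply, Matrix.star_apply, permMatrix_apply, Matrix.one_apply,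
      apply_ite star, star_one, star_zero]
    rcases eq_or_ne i j with rfl | h
    · rw [if_pos rfl, Finset.sum_eq_single (σ.symm i)] <;>
        simp +contextual [Equiv.eq_symm_apply, eq_comm]
    · rw [if_neg h]
      apply Finset.sum_eq_zero
      intro k _
      split <;> split <;> simp_all
  · ext i j
    simp only [Matrix.mul_apply, Matrix.star_apply, permMatrix_apply, Matrix.one_apply,
      apply_ite star, star_one, star_zero]
    rw [Finset.sum_eq_single (σ i)] <;>
      simp +contextual [EmbeddingLike.apply_eq_iff_eq, eq_comm]

lemma permMatrix_real (σ : Equiv.Perm n) :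
    (σ.permMatrix ℂ).map (starRingEnd ℂ) = σ.permMatrix ℂ := by
  ext i j; simp [permMatrix_apply, apply_ite]

lemma exists_real_diag (A : Matrix n n ℂ) (hA : A.IsHermitian)
    (hAreal : A.map (starRingEnd ℂ) = A) :
    ∃ (O : Matrix n n ℂ) (d : n → ℝ), O ∈ Matrix.unitaryGroup n ℂ ∧
      O.map (starRingEnd ℂ) = O ∧
      A = O * Matrix.diagonal (fun i => (d i : ℂ)) * Oᴴ := by
  have hreal : ∀ i j, (starRingEnd ℂ) (A i j) = A i j := fun i j => congrFun (congrFun hAreal i) j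
  set Ar : Matrix n n ℝ := Matrix.of fun i j => (A i j).re with hAr_def
  have hA_eq : A = Ar.map Complex.ofRealHom := by
    ext i j
    have h1 : ((A i j).re : ℂ) = A i j := Complex.conj_eq_iff_re.mp (hreal i j)
    simp only [Matrix.map_apply, Matrix.of_apply, Complex.ofRealHom_eq_coe, Ar]
    exact h1.symm
  have hArH : Ar.IsHermitian := by
    ext i j
    simp only [Matrix.conjTranspose_apply, Matrix.of_apply, RCLike.star_def, Ar]
    rw [show A i j = star (A j i) from (hA.apply i j).symm]
    simp
  set V : Matrix n n ℝ := (hArH.eigenvectorUnitary : Matrix n n ℝ) with hV_def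
  have hVmem := (hArH.eigenvectorUnitary).2
  set F : Matrix n n ℝ →+* Matrix n n ℂ := (Complex.ofRealHom).mapMatrix with hF_def
  have hstar : (F V)ᴴ = F (star V) := by
    ext i j
    simp [F, Matrix.conjTranspose_apply]
  have hdiag : F (Matrix.diagonal (RCLike.ofReal ∘ hArH.eigenvalues))
      = Matrix.diagonal (fun i => ((hArH.eigenvalues i : ℝ) : ℂ)) := by
    ext i j
    rcases eq_or_ne i j with rfl | h
    · simp [F, Matrix.diagonal_apply_eq]
    · simp [F, Matrix.diagonal_apply_ne _ h]
  refine ⟨F V, hArH.eigenvalues, ?_, ?_, ?_⟩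
  · constructor
    · rw [show star (F V) = F (star V) from hstar, ← F.map_mul, hVmem.1, F.map_one]
    · rw [show star (F V) = F (star V) from hstar, ← F.map_mul, hVmem.2, F.map_one]
  · ext i j; simp [F]
  · rw [hA_eq]
    calc Ar.map Complex.ofRealHom = F Ar := (RingHom.mapMatrix_apply _ _).symm
      _ = F (V * Matrix.diagonal (RCLike.ofReal ∘ hArH.eigenvalues) * star V) :=
        congrArg F hArH.spectral_theorem
      _ = F V * F (Matrix.diagonal (RCLike.ofReal ∘ hArH.eigenvalues)) * F (star V) := by
        rw [F.map_mul, F.map_mul]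
      _ = F V * Matrix.diagonal (fun i => ((hArH.eigenvalues i : ℝ) : ℂ)) * (F V)ᴴ := by
        rw [hstar, hdiag]

lemma permMatrixR_apply (σ : Equiv.Perm n) (i j : n) :
    (σ.permMatrix ℝ) i j = if σ i = j then 1 else 0 := by
  simp [Equiv.Perm.permMatrix, PEquiv.toMatrix_apply, Equiv.toPEquiv_apply]

lemma trace_diag_re (d m : n → ℝ) (Q : Matrix n n ℂ) :
    ((Matrix.diagonal (fun i => (d i : ℂ)) * Qᴴ * Matrix.diagonal (fun i => (m i : ℂ)) * Q).trace).re
    = ∑ i, ∑ j, d i * m j * Complex.normSq (Q j i) := by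
  have hentry : ∀ i, (Matrix.diagonal (fun i => (d i : ℂ)) * Qᴴ
      * Matrix.diagonal (fun i => (m i : ℂ)) * Q) i i
      = ∑ j, ((d i * m j * Complex.normSq (Q j i) : ℝ) : ℂ) := by
    intro i
    rw [Matrix.mul_apply]
    refine Finset.sum_congr rfl fun j _ => ?_
    rw [Matrix.mul_diagonal, Matrix.diagonal_mul, Matrix.conjTranspose_apply, RCLike.star_def]
    calc (d i : ℂ) * (starRingEnd ℂ) (Q j i) * (m j) * Q j i
        = (d i : ℂ) * (m j) * (Q j i * (starRingEnd ℂ) (Q j i)) := by ring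
      _ = ((d i * m j * Complex.normSq (Q j i) : ℝ) : ℂ) := by
          rw [Complex.mul_conj]; push_cast; ring
  rw [Matrix.trace]
  simp only [Matrix.diag_apply, hentry]
  rw [Complex.re_sum]
  refine Finset.sum_congr rfl fun i _ => ?_
  rw [Complex.re_sum]
  simp

lemma normSq_doublyStochastic (Q : Matrix n n ℂ) (hQ : Q ∈ Matrix.unitaryGroup n ℂ) :
    (Matrix.of fun i j => Complex.normSq (Q j i)) ∈ doublyStochastic ℝ n := by
  rw [mem_doublyStochastic_iff_sum]
  refine ⟨fun i j => Complex.normSq_nonneg _, fun i => ?_, fun j => ?_⟩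
  · have h1 : (star Q * Q) i i = 1 := by rw [hQ.1]; simp [Matrix.one_apply]
    rw [Matrix.mul_apply] at h1
    have h2 : ∀ j, (star Q) i j * Q j i = ((Complex.normSq (Q j i) : ℝ) : ℂ) := by
      intro j
      rw [Matrix.star_apply, ← Complex.mul_conj, RCLike.star_def]
      ring
    rw [Finset.sum_congr rfl (fun j _ => h2 j), ← Complex.ofReal_sum] at h1
    have := congrArg Complex.re h1
    simpa using this
  · have h1 : (Q * star Q) j j = 1 := by rw [hQ.2]; simp [Matrix.one_apply]
    rw [Matrix.mul_apply] at h1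
    have h2 : ∀ i, Q j i * (star Q) i j = ((Complex.normSq (Q j i) : ℝ) : ℂ) := by
      intro i
      rw [Matrix.star_apply, ← Complex.mul_conj, RCLike.star_def]
    rw [Finset.sum_congr rfl (fun i _ => h2 i), ← Complex.ofReal_sum] at h1
    have := congrArg Complex.re h1
    simpa using this

lemma lower_bound (d m : n → ℝ) (Q : Matrix n n ℂ) (hQ : Q ∈ Matrix.unitaryGroup n ℂ)
    (σ₀ : Equiv.Perm n) (hσ₀ : ∀ σ : Equiv.Perm n, (∑ i, d i * m (σ₀ i)) ≤ ∑ i, d i * m (σ i)) :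
    (∑ i, d i * m (σ₀ i)) ≤ ∑ i, ∑ j, d i * m j * Complex.normSq (Q j i) := by
  obtain ⟨w, hw0, hw1, hw⟩ :=
    exists_eq_sum_perm_of_mem_doublyStochastic (normSq_doublyStochastic Q hQ)
  have hT : ∀ i j, Complex.normSq (Q j i) = ∑ σ : Equiv.Perm n, w σ * (σ.permMatrix ℝ) i j := by
    intro i j
    have h := congrFun (congrFun hw i) j
    simp only [Matrix.sum_apply, Matrix.smul_apply, smul_eq_mul, Matrix.of_apply] at h
    exact h.symm
  calc (∑ i, d i * m (σ₀ i)) = ∑ σ : Equiv.Perm n, w σ * ∑ i, d i * m (σ₀ i) := by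
        rw [← Finset.sum_mul, hw1, one_mul]
    _ ≤ ∑ σ : Equiv.Perm n, w σ * ∑ i, d i * m (σ i) := by
        refine Finset.sum_le_sum fun σ _ => mul_le_mul_of_nonneg_left (hσ₀ σ) (hw0 σ)
    _ = ∑ i, ∑ j, d i * m j * Complex.normSq (Q j i) := by
        simp only [hT]
        rw [eq_comm]
        calc ∑ i, ∑ j, d i * m j * ∑ σ : Equiv.Perm n, w σ * (σ.permMatrix ℝ) i j
            = ∑ i, ∑ σ : Equiv.Perm n, w σ * (d i * m (σ i)) := by
              refine Finset.sum_congr rfl fun i _ => ?_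
              simp only [Finset.mul_sum]
              rw [Finset.sum_comm]
              refine Finset.sum_congr rfl fun σ _ => ?_
              simp only [permMatrixR_apply, mul_ite, mul_one, mul_zero]
              rw [Finset.sum_ite_eq (Finset.univ) (σ i) (fun j => d i * m j * w σ)]
              simp [mul_comm, mul_assoc, mul_left_comm]
          _ = ∑ σ : Equiv.Perm n, w σ * ∑ i, d i * m (σ i) := by
              rw [Finset.sum_comm]
              exact Finset.sum_congr rfl fun σ _ => (Finset.mul_sum _ _ _).symm

lemma conjTranspose_real {A : Matrix n n ℂ} (h : A.map (starRingEnd ℂ) = A) :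
    (Aᴴ).map (starRingEnd ℂ) = Aᴴ := by
  ext i j
  have h1 := congrFun (congrFun h j) i
  simp only [Matrix.map_apply] at h1
  simp [Matrix.conjTranspose_apply, Matrix.map_apply, h1]

lemma trace_reduce (O P V D M : Matrix n n ℂ) :
    ((O * D * Oᴴ) * (Vᴴ * (P * M * Pᴴ) * V)).trace
      = (D * (Pᴴ * V * O)ᴴ * (M * (Pᴴ * V * O))).trace := by
  have h1 : (O * D * Oᴴ) * (Vᴴ * (P * M * Pᴴ) * V)
      = O * (D * (Oᴴ * (Vᴴ * (P * (M * (Pᴴ * V)))))) := by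
    simp only [Matrix.mul_assoc]
  rw [h1, Matrix.trace_mul_comm]
  congr 1
  have h2 : (Pᴴ * V * O)ᴴ = Oᴴ * (Vᴴ * P) := by
    simp [Matrix.conjTranspose_mul, Matrix.mul_assoc]
  rw [h2]
  simp only [Matrix.mul_assoc]

lemma exists_real_min (S H : Matrix n n ℂ) (hS : S.IsHermitian)
    (hSreal : S.map (starRingEnd ℂ) = S) (hH : H.IsHermitian)
    (hHreal : H.map (starRingEnd ℂ) = H) :
    ∃ U : Matrix n n ℂ, U ∈ Matrix.unitaryGroup n ℂ ∧ U.map (starRingEnd ℂ) = U ∧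
      ∀ V ∈ Matrix.unitaryGroup n ℂ,
        ((S * (Uᴴ * H * U)).trace).re ≤ ((S * (Vᴴ * H * V)).trace).re := by
  obtain ⟨O, d, hOu, hOr, hSd⟩ := exists_real_diag S hS hSreal
  obtain ⟨P, m, hPu, hPr, hHd⟩ := exists_real_diag H hH hHreal
  obtain ⟨σ₀, -, hσ₀⟩ := Finset.exists_min_image Finset.univ
    (fun σ : Equiv.Perm n => ∑ i, d i * m (σ i)) ⟨1, Finset.mem_univ 1⟩
  have hσ₀' : ∀ σ : Equiv.Perm n, (∑ i, d i * m (σ₀ i)) ≤ ∑ i, d i * m (σ i) :=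
    fun σ => hσ₀ σ (Finset.mem_univ σ)
  -- general trace formula
  have htr : ∀ V : Matrix n n ℂ,
      ((S * (Vᴴ * H * V)).trace).re
        = ∑ i, ∑ j, d i * m j * Complex.normSq ((Pᴴ * V * O) j i) := by
    intro V
    have : S * (Vᴴ * H * V) = (O * Matrix.diagonal (fun i => (d i : ℂ)) * Oᴴ)
        * (Vᴴ * (P * Matrix.diagonal (fun i => (m i : ℂ)) * Pᴴ) * V) := by
      rw [← hSd, ← hHd]
    rw [this, trace_reduce]
    have := trace_diag_re d m (Pᴴ * V * O)
    rw [← this]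
    congr 2
    simp only [Matrix.mul_assoc]
  set U : Matrix n n ℂ := P * (σ₀⁻¹.permMatrix ℂ) * Oᴴ with hU_def
  have hQU : Pᴴ * U * O = σ₀⁻¹.permMatrix ℂ := by
    have h1 : Pᴴ * P = 1 := by
      have := hPu.1; rwa [Matrix.star_eq_conjTranspose] at this
    have h2 : Oᴴ * O = 1 := by
      have := hOu.1; rwa [Matrix.star_eq_conjTranspose] at this
    calc Pᴴ * (P * (σ₀⁻¹.permMatrix ℂ) * Oᴴ) * O
        = (Pᴴ * P) * (σ₀⁻¹.permMatrix ℂ) * (Oᴴ * O) := by simp only [Matrix.mul_assoc]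
      _ = σ₀⁻¹.permMatrix ℂ := by rw [h1, h2, Matrix.one_mul, Matrix.mul_one]
  have hUmem : U ∈ Matrix.unitaryGroup n ℂ := by
    have hOH : Oᴴ ∈ Matrix.unitaryGroup n ℂ := by
      have := Unitary.star_mem hOu
      rwa [Matrix.star_eq_conjTranspose] at this
    exact mul_mem (mul_mem hPu (permMatrix_mem_unitary σ₀⁻¹)) hOH
  have hUreal : U.map (starRingEnd ℂ) = U := by
    rw [hU_def, Matrix.map_mul, Matrix.map_mul, hPr, permMatrix_real, conjTranspose_real hOr]
  refine ⟨U, hUmem, hUreal, fun V hV => ?_⟩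
  rw [htr U, htr V]
  have hQV : Pᴴ * V * O ∈ Matrix.unitaryGroup n ℂ := by
    have hPH : Pᴴ ∈ Matrix.unitaryGroup n ℂ := by
      have := Unitary.star_mem hPu
      rwa [Matrix.star_eq_conjTranspose] at this
    exact mul_mem (mul_mem hPH hV) hOu
  have hval : (∑ i, ∑ j, d i * m j * Complex.normSq ((Pᴴ * U * O) j i))
      = ∑ i, d i * m (σ₀ i) := by
    rw [hQU]
    refine Finset.sum_congr rfl fun i _ => ?_
    rw [Finset.sum_eq_single (σ₀ i)]
    · simp [Equiv.toPEquiv_apply]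
    · intro j _ hj
      have hne : ¬ (σ₀⁻¹ j = i) := by
        intro hc
        exact hj (by rw [← hc]; simp)
      simp [Equiv.toPEquiv_apply, show ¬ (σ₀.symm j = i) from hne]
    · simp
  rw [hval]
  exact lower_bound d m _ hQV σ₀ hσ₀'

lemma real_mul {A B : Matrix n n ℂ} (hA : A.map (starRingEnd ℂ) = A)
    (hB : B.map (starRingEnd ℂ) = B) : (A * B).map (starRingEnd ℂ) = A * B := by
  rw [Matrix.map_mul, hA, hB]

lemma real_sub {A B : Matrix n n ℂ} (hA : A.map (starRingEnd ℂ) = A)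
    (hB : B.map (starRingEnd ℂ) = B) : (A - B).map (starRingEnd ℂ) = A - B := by
  rw [Matrix.map_sub _ (fun a b => map_sub _ a b), hA, hB]

lemma re_trace_conj_mul (A X : Matrix n n ℂ) (hX : X.map (starRingEnd ℂ) = X) :
    ((A.map (starRingEnd ℂ) * X).trace).re = ((A * X).trace).re := by
  have h1 : (A.map (starRingEnd ℂ) * X) = (A * X).map (starRingEnd ℂ) := by
    conv_lhs => rw [← hX]
    rw [Matrix.map_mul]
  have h2 : ((A * X).map (starRingEnd ℂ)).trace = (starRingEnd ℂ) ((A * X).trace) := by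
    rw [Matrix.trace, Matrix.trace, map_sum]
    exact Finset.sum_congr rfl fun i _ => rfl
  rw [h1, h2]
  exact Complex.conj_re _

end Aux

/-- for `H` Hermitian commuting with complex conjugation `𝒯`, and
`S_𝒯(ρ) = (ρ + 𝒯ρ𝒯⁻¹)/2`, the `𝒯`-symmetric ergotropy of `ρ` (supremum over unitaries
commuting with `𝒯`, i.e., with real entries) equals the unrestricted ergotropy of
`S_𝒯(ρ)`. -/
theorem time_reversal_ergotropy_eq {n : Type*} [Fintype n] [DecidableEq n]
    (H ρ : Matrix n n ℂ)
    (hH : H.IsHermitian) (hHreal : H.map (starRingEnd ℂ) = H)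
    (hρ : ρ.PosSemidef) :
    (⨆ U : {U : Matrix.unitaryGroup n ℂ //
        ((U : Matrix n n ℂ)).map (starRingEnd ℂ) = (U : Matrix n n ℂ)},
      workR ρ H ((U : Matrix.unitaryGroup n ℂ) : Matrix n n ℂ))
    = ⨆ V : Matrix.unitaryGroup n ℂ,
        workR ((2 : ℂ)⁻¹ • (ρ + ρ.map (starRingEnd ℂ))) H (V : Matrix n n ℂ) := by
  set S : Matrix n n ℂ := (2 : ℂ)⁻¹ • (ρ + ρ.map (starRingEnd ℂ)) with hS_def
  have hρH : ρ.IsHermitian := hρ.1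
  have hρconjH : (ρ.map (starRingEnd ℂ)).IsHermitian := by
    ext i j
    simp only [Matrix.conjTranspose_apply, Matrix.map_apply]
    rw [show ρ j i = star (ρ i j) from (hρH.apply j i).symm]
    simp
  have hSH : S.IsHermitian := by
    have h1 : (ρ + ρ.map (starRingEnd ℂ)).IsHermitian := hρH.add hρconjH
    unfold Matrix.IsHermitian at h1 ⊢
    rw [hS_def, Matrix.conjTranspose_smul, h1]
    norm_num
  have hSreal : S.map (starRingEnd ℂ) = S := by
    ext i j
    simp only [Matrix.map_apply, Matrix.smul_apply, Matrix.add_apply, hS_def, smul_eq_mul]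
    rw [_root_.map_mul, map_add, Complex.conj_conj, map_inv₀, map_ofNat]
    ring
  -- the universal real minimizer
  obtain ⟨U₀, hU₀u, hU₀r, hmin⟩ := exists_real_min S H hSH hSreal hH hHreal
  -- expansion of workR
  have expand : ∀ σ W : Matrix n n ℂ,
      workR σ H W = ((σ * H).trace).re - ((σ * (Wᴴ * H * W)).trace).re := by
    intro σ W
    unfold workR
    rw [Matrix.mul_sub, Matrix.trace_sub, Complex.sub_re]
  have hmax : ∀ V ∈ Matrix.unitaryGroup n ℂ, workR S H V ≤ workR S H U₀ := by
    intro V hV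
    rw [expand, expand]
    exact sub_le_sub_left (hmin V hV) _
  -- for real unitaries, workR ρ = workR S
  have hswitch : ∀ W : Matrix n n ℂ, W.map (starRingEnd ℂ) = W → workR ρ H W = workR S H W := by
    intro W hW
    have hXreal : (H - Wᴴ * H * W).map (starRingEnd ℂ) = H - Wᴴ * H * W :=
      real_sub hHreal (real_mul (real_mul (conjTranspose_real hW) hHreal) hW)
    have hconj : workR (ρ.map (starRingEnd ℂ)) H W = workR ρ H W := by
      unfold workR
      exact re_trace_conj_mul ρ _ hXreal
    unfold workR
    rw [hS_def, Matrix.smul_mul, Matrix.add_mul, Matrix.trace_smul, Matrix.trace_add,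
      smul_eq_mul]
    rw [show (2:ℂ)⁻¹ = ((2⁻¹ : ℝ) : ℂ) by norm_num, Complex.re_ofReal_mul, Complex.add_re]
    unfold workR at hconj
    rw [hconj]
    ring
  have hb : workR ρ H U₀ = workR S H U₀ := hswitch U₀ hU₀r
  -- nonempty index types
  haveI hne : Nonempty {U : Matrix.unitaryGroup n ℂ //
      ((U : Matrix n n ℂ)).map (starRingEnd ℂ) = (U : Matrix n n ℂ)} := ⟨⟨⟨U₀, hU₀u⟩, hU₀r⟩⟩
  -- bounded above
  have hbdd1 : BddAbove (Set.range fun U : {U : Matrix.unitaryGroup n ℂ //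
      ((U : Matrix n n ℂ)).map (starRingEnd ℂ) = (U : Matrix n n ℂ)} =>
        workR ρ H ((U : Matrix.unitaryGroup n ℂ) : Matrix n n ℂ)) := by
    refine ⟨workR S H U₀, ?_⟩
    rintro x ⟨U, rfl⟩
    exact le_of_eq_of_le (hswitch _ U.2) (hmax _ U.1.2)
  have hbdd2 : BddAbove (Set.range fun V : Matrix.unitaryGroup n ℂ =>
      workR S H (V : Matrix n n ℂ)) := by
    refine ⟨workR S H U₀, ?_⟩
    rintro x ⟨V, rfl⟩
    exact hmax _ V.2
  apply le_antisymm
  · apply ciSup_le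
    intro U
    rw [hswitch _ U.2]
    calc workR S H (U : Matrix.unitaryGroup n ℂ) ≤ workR S H U₀ := hmax _ U.1.2
      _ ≤ _ := le_ciSup hbdd2 (⟨U₀, hU₀u⟩ : Matrix.unitaryGroup n ℂ)
  · apply ciSup_le
    intro V
    calc workR S H (V : Matrix n n ℂ) ≤ workR S H U₀ := hmax _ V.2
      _ = workR ρ H U₀ := hb.symm
      _ ≤ _ := le_ciSup hbdd1 ⟨⟨U₀, hU₀u⟩, hU₀r⟩
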